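/- Let G be a finite simple graph with vertex set V(G) = {v_1, …, v_n} and let 1 < k < n. Suppose that: (1) N[v_1] ∪ … ∪ N[v_k] = V(G); (2) N[v_1] ∩ (N[v_2] ∪ … ∪ N[v_k]) = ∅; (3) |d(v_i) − d(v_j)| ≠ 1 for every i ∈ {1,…,k} and every j ∈ {1,…,n} with j ≠ i; (4) v_1 is the unique vertex of G of degree d(v_1); (5) for every i ∈ {2,…,k}, every vertex of G having degree d(v_i) lies in {v_2,…,v_k}. Let G' be a finite simple graph with vertex set V(G') = {v'_1, …, v'_n} such that for every j ∈ {1,…,n} the vertex-deleted subgraph G − v_j is isomorphic to G' − v'_j. Then every isomorphism f_1 : G − v_1 → G' − v'_1 maps the set V(G) \ N[v_1] onto the set V(G') \ N[v'_1]. -/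

import Mathlib

open Finset SimpleGraph

variable {n : ℕ}

private lemma aux_deg (H : SimpleGraph (Fin n)) [DecidableRel H.Adj] (j : Fin n)
    [Fintype ({j}ᶜ : Set (Fin n))]
    [∀ x : ({j}ᶜ : Set (Fin n)), Fintype ((H.induce ({j}ᶜ : Set (Fin n))).neighborSet x)]
    (x : ({j}ᶜ : Set (Fin n))) :
    (H.induce ({j}ᶜ : Set (Fin n))).degree x + (if H.Adj ↑x j then 1 else 0)
      = H.degree ↑x := by
  classical
  have key : (H.induce ({j}ᶜ : Set (Fin n))).degree x
      = ((H.neighborFinset ↑x).erase j).card := by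
    rw [← SimpleGraph.card_neighborSet_eq_degree, ← Fintype.card_coe]
    refine Fintype.card_congr ?_
    refine ⟨fun y => ⟨↑↑y, ?_⟩, fun y => ⟨⟨↑y, ?_⟩, ?_⟩, fun y => ?_, fun y => ?_⟩
    · have hy : (H.induce ({j}ᶜ : Set (Fin n))).Adj x ↑y := y.2
      have hne : ((y : ({j}ᶜ : Set (Fin n))) : Fin n) ≠ j := (y : ({j}ᶜ : Set (Fin n))).2
      simp only [comap_adj, Function.Embedding.coe_subtype] at hy
      simp [Finset.mem_erase, SimpleGraph.mem_neighborFinset, hne, hy]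
    · have hy := y.2
      simp only [Finset.mem_erase, SimpleGraph.mem_neighborFinset] at hy
      simpa using hy.1
    · have hy := y.2
      simp only [Finset.mem_erase, SimpleGraph.mem_neighborFinset] at hy
      show (H.induce ({j}ᶜ : Set (Fin n))).Adj x _
      simp only [comap_adj, Function.Embedding.coe_subtype]
      exact hy.2
    · rfl
    · rfl
  rw [key]
  by_cases h : H.Adj ↑x j
  · have hmem : j ∈ H.neighborFinset ↑x := by simpa [SimpleGraph.mem_neighborFinset] using h
    rw [Finset.card_erase_of_mem hmem, if_pos h]
    have : 0 < (H.neighborFinset ↑x).card := Finset.card_pos.mpr ⟨j, hmem⟩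
    have hd : (H.neighborFinset ↑x).card = H.degree ↑x := rfl
    omega
  · have hmem : j ∉ H.neighborFinset ↑x := by simpa [SimpleGraph.mem_neighborFinset] using h
    rw [Finset.erase_eq_of_notMem hmem, if_neg h]
    rfl

private lemma iso_deg {α β : Type*} {H : SimpleGraph α} {H' : SimpleGraph β}
    (g : H ≃g H') (v : α) [Fintype (H.neighborSet v)] [Fintype (H'.neighborSet (g v))] :
    H.degree v = H'.degree (g v) := by
  rw [← SimpleGraph.card_neighborSet_eq_degree, ← SimpleGraph.card_neighborSet_eq_degree]
  exact Fintype.card_congr (g.mapNeighborSet v)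

private lemma aux_sum (H : SimpleGraph (Fin n)) [DecidableRel H.Adj] (j : Fin n)
    [Fintype ({j}ᶜ : Set (Fin n))]
    [∀ x : ({j}ᶜ : Set (Fin n)), Fintype ((H.induce ({j}ᶜ : Set (Fin n))).neighborSet x)] :
    (∑ x : ({j}ᶜ : Set (Fin n)), (H.induce ({j}ᶜ : Set (Fin n))).degree x) + 2 * H.degree j
      = ∑ u : Fin n, H.degree u := by
  classical
  have hsplit : (∑ x : ({j}ᶜ : Set (Fin n)), (H.induce ({j}ᶜ : Set (Fin n))).degree x)
      + (∑ x : ({j}ᶜ : Set (Fin n)), (if H.Adj ↑x j then 1 else 0))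
      = ∑ x : ({j}ᶜ : Set (Fin n)), H.degree ↑x := by
    rw [← Finset.sum_add_distrib]
    exact Finset.sum_congr rfl fun x _ => aux_deg H j x
  have hmem : ∀ u : Fin n, u ∈ Finset.univ.erase j ↔ u ∈ ({j}ᶜ : Set (Fin n)) := by
    intro u; simp
  have hs1 : (∑ u ∈ Finset.univ.erase j, H.degree u)
      = ∑ x : ({j}ᶜ : Set (Fin n)), H.degree ↑x :=
    Finset.sum_subtype _ hmem _
  have hs2 : (∑ u ∈ Finset.univ.erase j, (if H.Adj u j then 1 else 0))
      = ∑ x : ({j}ᶜ : Set (Fin n)), (if H.Adj ↑x j then 1 else 0) :=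
    Finset.sum_subtype _ hmem _
  have hs3 : (∑ u ∈ Finset.univ.erase j, (if H.Adj u j then 1 else 0)) = H.degree j := by
    rw [Finset.sum_erase (f := fun u => if H.Adj u j then 1 else 0) Finset.univ (by simp)]
    rw [Finset.sum_boole]
    have : Finset.univ.filter (fun u => H.Adj u j) = H.neighborFinset j := by
      ext u; simp [SimpleGraph.mem_neighborFinset, SimpleGraph.adj_comm]
    rw [this]
    simp only [Nat.cast_id]
    rfl
  have hs4 : (∑ u ∈ Finset.univ.erase j, H.degree u) + H.degree j = ∑ u : Fin n, H.degree u :=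
    Finset.sum_erase_add _ _ (Finset.mem_univ j)
  omega

private lemma aux_count (H : SimpleGraph (Fin n)) [DecidableRel H.Adj] (j : Fin n) (d : ℕ)
    [Fintype ({j}ᶜ : Set (Fin n))]
    [∀ x : ({j}ᶜ : Set (Fin n)), Fintype ((H.induce ({j}ᶜ : Set (Fin n))).neighborSet x)] :
    (Finset.univ.filter fun u : Fin n =>
        u ≠ j ∧ H.degree u = d + (if H.Adj u j then 1 else 0)).card
      = Fintype.card {x : ({j}ᶜ : Set (Fin n)) //
          (H.induce ({j}ᶜ : Set (Fin n))).degree x = d} := by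
  classical
  rw [← Fintype.card_subtype]
  refine Fintype.card_congr ?_
  refine ⟨fun u => ⟨⟨↑u, by simpa using u.2.1⟩, ?_⟩,
          fun x => ⟨↑↑x, ?_, ?_⟩, fun u => rfl, fun x => rfl⟩
  · have h1 := aux_deg H j ⟨↑u, by simpa using u.2.1⟩
    have h2 := u.2.2
    simp only at h1 h2 ⊢
    omega
  · exact (↑x : ({j}ᶜ : Set (Fin n))).2
  · have h1 := aux_deg H j (↑x : ({j}ᶜ : Set (Fin n)))
    have h2 := x.2
    omega

private lemma aux_card2 (G G' : SimpleGraph (Fin n)) [DecidableRel G.Adj] [DecidableRel G'.Adj]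
    (j : Fin n) (d : ℕ)
    (g : G.induce ({j}ᶜ : Set (Fin n)) ≃g G'.induce ({j}ᶜ : Set (Fin n))) :
    (Finset.univ.filter fun u : Fin n =>
        u ≠ j ∧ G.degree u = d + (if G.Adj u j then 1 else 0)).card
      = (Finset.univ.filter fun u : Fin n =>
        u ≠ j ∧ G'.degree u = d + (if G'.Adj u j then 1 else 0)).card := by
  classical
  rw [aux_count G j d, aux_count G' j d]
  refine Fintype.card_congr (Equiv.subtypeEquiv g.toEquiv fun x => ?_)
  have h1 := iso_deg g x
  have h2 : g.toEquiv x = g x := rfl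
  rw [h2, ← h1]

private lemma aux_degree_eq (G G' : SimpleGraph (Fin n)) [DecidableRel G.Adj]
    [DecidableRel G'.Adj] (hn : 2 < n)
    (hdel : ∀ j : Fin n,
      Nonempty (G.induce ({j}ᶜ : Set (Fin n)) ≃g G'.induce ({j}ᶜ : Set (Fin n)))) :
    ∀ u : Fin n, G'.degree u = G.degree u := by
  classical
  have key : ∀ j : Fin n, 2 * G.degree j + (∑ u : Fin n, G'.degree u)
      = 2 * G'.degree j + (∑ u : Fin n, G.degree u) := by
    intro j
    obtain ⟨g⟩ := hdel j
    have hS : (∑ x : ({j}ᶜ : Set (Fin n)), (G.induce ({j}ᶜ : Set (Fin n))).degree x)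
        = ∑ x : ({j}ᶜ : Set (Fin n)), (G'.induce ({j}ᶜ : Set (Fin n))).degree x := by
      rw [← Equiv.sum_comp g.toEquiv
        (fun x => (G'.induce ({j}ᶜ : Set (Fin n))).degree x)]
      refine Finset.sum_congr rfl fun x _ => ?_
      have h1 := iso_deg g x
      have h2 : g.toEquiv x = g x := rfl
      rw [h2, ← h1]
    have h1 := aux_sum G j
    have h2 := aux_sum G' j
    omega
  set T := ∑ u : Fin n, G.degree u with hT
  set T' := ∑ u : Fin n, G'.degree u with hT'
  have hTT : 2 * T + n * T' = 2 * T' + n * T := by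
    have e1 : ∑ j : Fin n, (2 * G.degree j + T') = 2 * T + n * T' := by
      rw [Finset.sum_add_distrib, ← Finset.mul_sum, Finset.sum_const, Finset.card_univ,
        Fintype.card_fin, smul_eq_mul, ← hT]
    have e2 : ∑ j : Fin n, (2 * G'.degree j + T) = 2 * T' + n * T := by
      rw [Finset.sum_add_distrib, ← Finset.mul_sum, Finset.sum_const, Finset.card_univ,
        Fintype.card_fin, smul_eq_mul, ← hT']
    rw [← e1, ← e2]
    exact Finset.sum_congr rfl fun j _ => key j
  have hfac : ((n : ℤ) - 2) * ((T' : ℤ) - (T : ℤ)) = 0 := by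
    have := hTT
    zify at this
    linear_combination this
  have hTeq : T' = T := by
    rcases mul_eq_zero.mp hfac with h | h
    · exfalso; omega
    · omega
  intro u
  have := key u
  omega

/-- Under hypotheses (1)–(5) and the isomorphisms of vertex-deleted subgraphs,
every isomorphism `f_1 : G − v_1 → G' − v'_1` maps `V(G) \ N[v_1]` onto
`V(G') \ N[v'_1]`. Vertices are indexed by `Fin n`, with `v_j` (resp. `v'_j`)
corresponding to index `⟨j-1, _⟩`; in particular `v_1` is `⟨0, _⟩`. -/
theorem stmt_6 (n k : ℕ) (hk1 : 1 < k) (hkn : k < n)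
    (G G' : SimpleGraph (Fin n)) [DecidableRel G.Adj] [DecidableRel G'.Adj]
    -- (1) N[v_1] ∪ … ∪ N[v_k] = V(G)
    (h1 : (⋃ i ∈ {i : Fin n | (i : ℕ) < k},
        insert i (G.neighborSet i)) = Set.univ)
    -- (2) N[v_1] ∩ (N[v_2] ∪ … ∪ N[v_k]) = ∅
    (h2 : insert (⟨0, by omega⟩ : Fin n) (G.neighborSet ⟨0, by omega⟩) ∩
        (⋃ i ∈ {i : Fin n | 0 < (i : ℕ) ∧ (i : ℕ) < k},
          insert i (G.neighborSet i)) = ∅)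
    -- (3) |d(v_i) − d(v_j)| ≠ 1 for i ∈ {1,…,k}, j ≠ i
    (h3 : ∀ i j : Fin n, (i : ℕ) < k → j ≠ i →
        |(G.degree i : ℤ) - (G.degree j : ℤ)| ≠ 1)
    -- (4) v_1 is the unique vertex of degree d(v_1)
    (h4 : ∀ w : Fin n, G.degree w = G.degree ⟨0, by omega⟩ → w = ⟨0, by omega⟩)
    -- (5) every vertex of degree d(v_i), i ∈ {2,…,k}, lies in {v_2,…,v_k}
    (h5 : ∀ i : Fin n, 0 < (i : ℕ) → (i : ℕ) < k →
        ∀ w : Fin n, G.degree w = G.degree i → 0 < (w : ℕ) ∧ (w : ℕ) < k)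
    -- G − v_j ≅ G' − v'_j for every j
    (hdel : ∀ j : Fin n,
        Nonempty (G.induce ({j}ᶜ : Set (Fin n)) ≃g G'.induce ({j}ᶜ : Set (Fin n)))) :
    ∀ f1 : G.induce ({(⟨0, by omega⟩ : Fin n)}ᶜ : Set (Fin n)) ≃g
           G'.induce ({(⟨0, by omega⟩ : Fin n)}ᶜ : Set (Fin n)),
      (fun x : ({(⟨0, by omega⟩ : Fin n)}ᶜ : Set (Fin n)) => ((f1 x : Fin n))) ''
          {x | (x : Fin n) ∉
            insert (⟨0, by omega⟩ : Fin n) (G.neighborSet ⟨0, by omega⟩)} =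
        {w : Fin n | w ∉
            insert (⟨0, by omega⟩ : Fin n) (G'.neighborSet ⟨0, by omega⟩)} := by
  classical
  have hn0 : (0 : ℕ) < n := by omega
  set v0 : Fin n := ⟨0, hn0⟩ with hv0
  intro f1
  show (fun x : ({v0}ᶜ : Set (Fin n)) => ((f1 x : Fin n))) ''
          {x | (x : Fin n) ∉ insert v0 (G.neighborSet v0)} =
        {w : Fin n | w ∉ insert v0 (G'.neighborSet v0)}
  -- pointwise degree equality between G and G'
  have hdeg : ∀ u : Fin n, G'.degree u = G.degree u :=
    aux_degree_eq G G' (by omega) hdel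
  -- counting transfer for adjacency to a fixed vertex among a degree class
  have hcount : ∀ (j : Fin n) (d : ℕ), (∀ u : Fin n, G.degree u ≠ d + 1) →
      (Finset.univ.filter fun u : Fin n =>
          (u ≠ j ∧ G.degree u = d) ∧ G.Adj u j).card
        = (Finset.univ.filter fun u : Fin n =>
          (u ≠ j ∧ G.degree u = d) ∧ G'.Adj u j).card := by
    intro j d hud
    obtain ⟨g⟩ := hdel j
    have hc := aux_card2 G G' j d g
    have e1 : (Finset.univ.filter fun u : Fin n =>
          u ≠ j ∧ G.degree u = d + (if G.Adj u j then 1 else 0))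
        = Finset.univ.filter fun u : Fin n => (u ≠ j ∧ G.degree u = d) ∧ ¬ G.Adj u j := by
      apply Finset.filter_congr
      intro u _
      by_cases h : G.Adj u j
      · have := hud u
        simp only [h, if_true, not_true]
        constructor
        · rintro ⟨h1', h2'⟩; omega
        · rintro ⟨_, hF⟩; exact hF.elim
      · simp only [h, if_false, not_false_iff, and_true, add_zero, and_assoc]
    have e2 : (Finset.univ.filter fun u : Fin n =>
          u ≠ j ∧ G'.degree u = d + (if G'.Adj u j then 1 else 0))
        = Finset.univ.filter fun u : Fin n => (u ≠ j ∧ G.degree u = d) ∧ ¬ G'.Adj u j := by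
      apply Finset.filter_congr
      intro u _
      rw [hdeg u]
      by_cases h : G'.Adj u j
      · have := hud u
        simp only [h, if_true, not_true]
        constructor
        · rintro ⟨h1', h2'⟩; omega
        · rintro ⟨_, hF⟩; exact hF.elim
      · simp only [h, if_false, not_false_iff, and_true, add_zero, and_assoc]
    rw [e1, e2] at hc
    have hsplitG := Finset.card_filter_add_card_filter_not
      (s := Finset.univ.filter fun u : Fin n => u ≠ j ∧ G.degree u = d)
      (p := fun u => G.Adj u j)
    have hsplitG' := Finset.card_filter_add_card_filter_not
      (s := Finset.univ.filter fun u : Fin n => u ≠ j ∧ G.degree u = d)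
      (p := fun u => G'.Adj u j)
    rw [Finset.filter_filter, Finset.filter_filter] at hsplitG hsplitG'
    omega
  -- v0 has the same neighbors in G and G'
  have hk0 : ((v0 : Fin n) : ℕ) < k := by show (0 : ℕ) < k; omega
  have hNadj : ∀ u : Fin n, G.Adj v0 u ↔ G'.Adj v0 u := by
    intro u
    by_cases hu : u = v0
    · subst hu; simp
    · have hud : ∀ w : Fin n, G.degree w ≠ G.degree v0 + 1 := by
        intro w hcon
        have hne : w ≠ v0 := by intro h; rw [h] at hcon; omega
        apply h3 v0 w hk0 hne
        have habs : (G.degree v0 : ℤ) - (G.degree w : ℤ) = -1 := by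
          rw [hcon]; push_cast; ring
        rw [habs]; norm_num
      have hcnt := hcount u (G.degree v0) hud
      constructor
      · intro hadj
        have hmemL : v0 ∈ Finset.univ.filter
            (fun w : Fin n => (w ≠ u ∧ G.degree w = G.degree v0) ∧ G.Adj w u) := by
          simp only [Finset.mem_filter, Finset.mem_univ, true_and]
          exact ⟨⟨fun h => hu h.symm, trivial⟩, hadj⟩
        have hpos : 0 < (Finset.univ.filter
            (fun w : Fin n => (w ≠ u ∧ G.degree w = G.degree v0) ∧ G'.Adj w u)).card := by
          rw [← hcnt]; exact Finset.card_pos.mpr ⟨v0, hmemL⟩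
        obtain ⟨w, hw⟩ := Finset.card_pos.mp hpos
        simp only [Finset.mem_filter] at hw
        have hwv : w = v0 := h4 w hw.2.1.2
        rw [← hwv]; exact hw.2.2
      · intro hadj
        have hmemL : v0 ∈ Finset.univ.filter
            (fun w : Fin n => (w ≠ u ∧ G.degree w = G.degree v0) ∧ G'.Adj w u) := by
          simp only [Finset.mem_filter, Finset.mem_univ, true_and]
          exact ⟨⟨fun h => hu h.symm, trivial⟩, hadj⟩
        have hpos : 0 < (Finset.univ.filter
            (fun w : Fin n => (w ≠ u ∧ G.degree w = G.degree v0) ∧ G.Adj w u)).card := by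
          rw [hcnt]; exact Finset.card_pos.mpr ⟨v0, hmemL⟩
        obtain ⟨w, hw⟩ := Finset.card_pos.mp hpos
        simp only [Finset.mem_filter] at hw
        have hwv : w = v0 := h4 w hw.2.1.2
        rw [← hwv]; exact hw.2.2
  -- the key pointwise mapping property
  have hmap : ∀ x : ({v0}ᶜ : Set (Fin n)),
      (↑x : Fin n) ∉ insert v0 (G.neighborSet v0) →
      (↑(f1 x) : Fin n) ∉ insert v0 (G'.neighborSet v0) := by
    intro x hx hy
    have hxne : (↑x : Fin n) ≠ v0 := fun h => hx (by rw [h]; exact Set.mem_insert _ _)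
    have hxadj : ¬ G.Adj v0 ↑x := fun h => hx (Set.mem_insert_iff.mpr (Or.inr h))
    have hyne : (↑(f1 x) : Fin n) ≠ v0 := by
      intro h
      exact ((Set.mem_compl_iff _ _).mp (f1 x).2) (Set.mem_singleton_iff.mpr h)
    have hyadj : G'.Adj v0 ↑(f1 x) := by
      rcases Set.mem_insert_iff.mp hy with h | h
      · exact absurd h hyne
      · exact h
    have e1 := aux_deg G v0 x
    have e2 := aux_deg G' v0 (f1 x)
    have e3 : (G.induce ({v0}ᶜ : Set (Fin n))).degree x
        = (G'.induce ({v0}ᶜ : Set (Fin n))).degree (f1 x) := iso_deg f1 x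
    rw [if_neg (fun h => hxadj h.symm)] at e1
    rw [if_pos hyadj.symm] at e2
    have hdy : G.degree (↑(f1 x) : Fin n) = G.degree ↑x + 1 := by
      have := hdeg (↑(f1 x) : Fin n); omega
    -- covering hypothesis
    have hxuniv : (↑x : Fin n) ∈ (⋃ i ∈ {i : Fin n | (i : ℕ) < k},
        insert i (G.neighborSet i)) := by rw [h1]; exact Set.mem_univ _
    obtain ⟨i, hik, hxmem⟩ := Set.mem_iUnion₂.mp hxuniv
    have hik' : (i : ℕ) < k := hik
    have hi0 : 0 < (i : ℕ) := by
      rcases Nat.eq_zero_or_pos (i : ℕ) with h0 | h0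
      · exfalso
        have hiv : i = v0 := Fin.ext h0
        rw [hiv] at hxmem
        exact hx hxmem
      · exact h0
    rcases Set.mem_insert_iff.mp hxmem with hxi | hxi
    · -- x is v_i itself
      have hne : (↑(f1 x) : Fin n) ≠ i := by
        intro h; rw [h, ← hxi] at hdy; omega
      apply h3 i ↑(f1 x) hik' hne
      have habs : (G.degree i : ℤ) - (G.degree (↑(f1 x) : Fin n) : ℤ) = -1 := by
        rw [hdy, ← hxi]; push_cast; ring
      rw [habs]; norm_num
    · -- x is adjacent to v_i
      have hiv0 : i ≠ v0 := by
        intro h; rw [h] at hi0; simp [hv0] at hi0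
      have hxiadj : G.Adj i ↑x := hxi
      set iS : ({v0}ᶜ : Set (Fin n)) := ⟨i, by simpa using hiv0⟩ with hiS
      have hadjS : (G.induce ({v0}ᶜ : Set (Fin n))).Adj iS x := by
        simp only [comap_adj, Function.Embedding.coe_subtype]
        exact hxiadj
      have hadjS' : (G'.induce ({v0}ᶜ : Set (Fin n))).Adj (f1 iS) (f1 x) :=
        f1.map_rel_iff.mpr hadjS
      have hwadj : G'.Adj (↑(f1 iS) : Fin n) ↑(f1 x) := hadjS'
      have ei : (G.induce ({v0}ᶜ : Set (Fin n))).degree iS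
          + (if G.Adj i v0 then 1 else 0) = G.degree i := aux_deg G v0 iS
      have ei' := aux_deg G' v0 (f1 iS)
      have eid : (G.induce ({v0}ᶜ : Set (Fin n))).degree iS
          = (G'.induce ({v0}ᶜ : Set (Fin n))).degree (f1 iS) := iso_deg f1 iS
      have hiv0adj : ¬ G.Adj i v0 := by
        intro h
        apply Set.eq_empty_iff_forall_notMem.mp h2 i
        exact ⟨Set.mem_insert_iff.mpr (Or.inr h.symm),
          Set.mem_iUnion₂.mpr ⟨i, ⟨hi0, hik'⟩, Set.mem_insert _ _⟩⟩
      rw [if_neg hiv0adj] at ei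
      have hwdeg : G.degree (↑(f1 iS) : Fin n) = G.degree i := by
        by_cases hw : G'.Adj (↑(f1 iS) : Fin n) v0
        · exfalso
          rw [if_pos hw] at ei'
          have h5' : G.degree (↑(f1 iS) : Fin n) = G.degree i + 1 := by
            have := hdeg (↑(f1 iS) : Fin n); omega
          have hne : (↑(f1 iS) : Fin n) ≠ i := by
            intro h; rw [h] at h5'; omega
          apply h3 i ↑(f1 iS) hik' hne
          have habs : (G.degree i : ℤ) - (G.degree (↑(f1 iS) : Fin n) : ℤ) = -1 := by
            rw [h5']; push_cast; ring
          rw [habs]; norm_num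
        · rw [if_neg hw] at ei'
          have := hdeg (↑(f1 iS) : Fin n); omega
      have hud : ∀ w : Fin n, G.degree w ≠ G.degree i + 1 := by
        intro w hcon
        have hne : w ≠ i := by intro h; rw [h] at hcon; omega
        apply h3 i w hik' hne
        have habs : (G.degree i : ℤ) - (G.degree w : ℤ) = -1 := by
          rw [hcon]; push_cast; ring
        rw [habs]; norm_num
      have hcnt := hcount (↑(f1 x) : Fin n) (G.degree i) hud
      have hwny : (↑(f1 iS) : Fin n) ≠ ↑(f1 x) := G'.ne_of_adj hwadj
      have hmemR : (↑(f1 iS) : Fin n) ∈ Finset.univ.filter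
          (fun u : Fin n => (u ≠ ↑(f1 x) ∧ G.degree u = G.degree i) ∧ G'.Adj u ↑(f1 x)) := by
        simp only [Finset.mem_filter, Finset.mem_univ, true_and]
        exact ⟨⟨hwny, hwdeg⟩, hwadj⟩
      have hpos : 0 < (Finset.univ.filter
          (fun u : Fin n => (u ≠ ↑(f1 x) ∧ G.degree u = G.degree i) ∧ G.Adj u ↑(f1 x))).card := by
        rw [hcnt]; exact Finset.card_pos.mpr ⟨_, hmemR⟩
      obtain ⟨u, hu⟩ := Finset.card_pos.mp hpos
      simp only [Finset.mem_filter] at hu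
      obtain ⟨hu0', huk'⟩ := h5 i hi0 hik' u hu.2.1.2
      have hyG : G.Adj v0 ↑(f1 x) := (hNadj _).mpr hyadj
      apply Set.eq_empty_iff_forall_notMem.mp h2 ↑(f1 x)
      refine ⟨Set.mem_insert_iff.mpr (Or.inr hyG), ?_⟩
      exact Set.mem_iUnion₂.mpr ⟨u, ⟨hu0', huk'⟩,
        Set.mem_insert_iff.mpr (Or.inr hu.2.2)⟩
  -- conclude by a cardinality argument
  have hNset : G'.neighborSet v0 = G.neighborSet v0 := by
    ext u; exact (hNadj u).symm
  rw [hNset]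
  apply Set.eq_of_subset_of_ncard_le (ht := Set.toFinite _)
  · rintro w ⟨x, hx, rfl⟩
    have hm := hmap x hx
    rw [hNset] at hm
    exact hm
  · have hinj : Function.Injective
        (fun x : ({v0}ᶜ : Set (Fin n)) => (↑(f1 x) : Fin n)) := by
      intro a b h
      exact f1.toEquiv.injective (Subtype.val_injective h)
    rw [Set.ncard_image_of_injective _ hinj]
    have himg : Subtype.val '' {x : ({v0}ᶜ : Set (Fin n)) |
        (↑x : Fin n) ∉ insert v0 (G.neighborSet v0)}
        = {w : Fin n | w ∉ insert v0 (G.neighborSet v0)} := by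
      ext w
      constructor
      · rintro ⟨x, hx, rfl⟩; exact hx
      · intro hw
        have hwv : w ≠ v0 := fun h => hw (by rw [h]; exact Set.mem_insert _ _)
        exact ⟨⟨w, by simpa using hwv⟩, hw, rfl⟩
    rw [← himg, Set.ncard_image_of_injective _ Subtype.val_injective]
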